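/- arXiv:1401.6757 — 2 statements merged into one kernel-verified Lean document; each statement's English description precedes it below -/
import Mathlib

section
/- Let A₁, A₂ and X₁, X₂, …, X_m be real n×n matrices and let ε > 0. Suppose there does not exist p ∈ [0,1] such that (p·A₁ + (1−p)·A₂) • X_i < ε/2 for all i = 1, …, m. Then there exist nonnegative weights q₁, …, q_m summing to 1 such that the matrix X = Σ_{i=1}^m q_i X_i satisfies A₁ • X ≥ ε/2 and A₂ • X ≥ ε/2. -/
open Matrix BigOperators

noncomputable def frob {m : Type*} [Fintype m] (A X : Matrix m m ℝ) : ℝ :=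
  (Aᵀ * X).trace

lemma frob_sum_smul {n m : ℕ} (A : Matrix (Fin n) (Fin n) ℝ) (q : Fin m → ℝ)
    (X : Fin m → Matrix (Fin n) (Fin n) ℝ) :
    frob A (∑ i, q i • X i) = ∑ i, q i * frob A (X i) := by
  simp [frob, Matrix.mul_sum, Matrix.mul_smul]

lemma frob_comb {n : ℕ} (A₁ A₂ X : Matrix (Fin n) (Fin n) ℝ) (p : ℝ) :
    frob (p • A₁ + (1 - p) • A₂) X = p * frob A₁ X + (1 - p) * frob A₂ X := by
  simp [frob, Matrix.transpose_add, Matrix.transpose_smul, Matrix.add_mul,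
    Matrix.smul_mul]

lemma sum_pair_mul {m : ℕ} (i j : Fin m) (x y : ℝ) (v : Fin m → ℝ) :
    ∑ k, ((if k = i then x else 0) + (if k = j then y else 0)) * v k
      = x * v i + y * v j := by
  simp [add_mul, Finset.sum_add_distrib, ite_mul]

lemma real_key {m : ℕ} (u w : Fin m → ℝ)
    (key : ∀ p ∈ Set.Icc (0:ℝ) 1, ∃ i, 0 ≤ p * u i + (1 - p) * w i) :
    ∃ q : Fin m → ℝ, (∀ i, 0 ≤ q i) ∧ (∑ i, q i) = 1 ∧
      0 ≤ ∑ i, q i * u i ∧ 0 ≤ ∑ i, q i * w i := by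
  by_cases hgood : ∃ i, 0 ≤ u i ∧ 0 ≤ w i
  · obtain ⟨i, hui, hwi⟩ := hgood
    refine ⟨fun k => (if k = i then 1 else 0) + (if k = i then 0 else 0), ?_, ?_, ?_, ?_⟩
    · intro k; by_cases hk : k = i <;> simp [hk]
    · simp
    · rw [sum_pair_mul]; simpa using hui
    · rw [sum_pair_mul]; simpa using hwi
  · push_neg at hgood
    -- from p = 1 : some i₀ with 0 ≤ u i₀ (hence w i₀ < 0)
    obtain ⟨i₀, hi₀⟩ := key 1 (by norm_num)
    simp only [one_mul, sub_self, zero_mul, add_zero] at hi₀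
    have hwi₀ : w i₀ < 0 := hgood i₀ hi₀
    -- from p = 0 : some j₀ with 0 ≤ w j₀ (hence u j₀ < 0)
    obtain ⟨j₀, hj₀⟩ := key 0 (by norm_num)
    simp only [zero_mul, sub_zero, one_mul, zero_add] at hj₀
    have huj₀ : u j₀ < 0 := by
      by_contra hc
      have := hgood j₀ (le_of_not_gt hc); linarith
    -- the finsets of "good-for-u" and "good-for-w" indices
    set I : Finset (Fin m) := Finset.univ.filter (fun i => 0 ≤ u i) with hI
    set J : Finset (Fin m) := Finset.univ.filter (fun i => 0 ≤ w i) with hJ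
    have hiI : i₀ ∈ I := by simp [hI, hi₀]
    have hjJ : j₀ ∈ J := by simp [hJ, hj₀]
    -- crossing thresholds
    set t : Fin m → ℝ := fun i => -w i / (u i - w i) with ht
    set s : Fin m → ℝ := fun i => w i / (w i - u i) with hs
    obtain ⟨i₁, hi₁I, hi₁min⟩ := I.exists_min_image t ⟨i₀, hiI⟩
    obtain ⟨j₁, hj₁J, hj₁max⟩ := J.exists_max_image s ⟨j₀, hjJ⟩
    have hui₁ : 0 ≤ u i₁ := by simpa [hI] using hi₁I
    have hwi₁ : w i₁ < 0 := hgood i₁ hui₁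
    have hwj₁ : 0 ≤ w j₁ := by simpa [hJ] using hj₁J
    have huj₁ : u j₁ < 0 := by
      by_contra hc
      have := hgood j₁ (le_of_not_gt hc); linarith
    have hdi : 0 < u i₁ - w i₁ := by linarith
    have hdj : 0 < w j₁ - u j₁ := by linarith
    -- key inequality : t i₁ ≤ s j₁
    have hts : t i₁ ≤ s j₁ := by
      by_contra hlt
      push_neg at hlt
      set p : ℝ := (s j₁ + t i₁) / 2 with hp
      have hs0 : 0 ≤ s j₁ := div_nonneg hwj₁ hdj.le
      have ht1 : t i₁ ≤ 1 := by
        rw [ht, div_le_one hdi]; linarith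
      have hsp : s j₁ < p := by rw [hp]; linarith
      have hpt : p < t i₁ := by rw [hp]; linarith
      have hp0 : 0 < p := lt_of_le_of_lt hs0 hsp
      have hp1 : p < 1 := lt_of_lt_of_le hpt ht1
      obtain ⟨i, hi⟩ := key p ⟨hp0.le, hp1.le⟩
      by_cases hui : 0 ≤ u i
      · -- i ∈ I, so t i₁ ≤ t i ≤ p < t i₁
        have hwi : w i < 0 := hgood i hui
        have hdi' : 0 < u i - w i := by linarith
        have hti : t i ≤ p := by
          rw [ht, div_le_iff₀ hdi']; nlinarith
        have : t i₁ ≤ t i := hi₁min i (by simp [hI, hui])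
        linarith
      · push_neg at hui
        by_cases hwi : 0 ≤ w i
        · -- i ∈ J, so p ≤ s i ≤ s j₁ < p
          have hdj' : 0 < w i - u i := by linarith
          have hsi : p ≤ s i := by
            rw [hs, le_div_iff₀ hdj']; nlinarith
          have : s i ≤ s j₁ := hj₁max i (by simp [hJ, hwi])
          linarith
        · push_neg at hwi
          nlinarith
    -- cross-product inequality
    have cross : 0 ≤ u i₁ * w j₁ - u j₁ * w i₁ := by
      rw [ht, hs, div_le_div_iff₀ hdi hdj] at hts
      nlinarith
    -- the two-point mixture
    set d : ℝ := u i₁ - u j₁ with hd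
    have hd0 : 0 < d := by rw [hd]; linarith
    set lam : ℝ := -u j₁ / d with hlam
    have hlam0 : 0 ≤ lam := div_nonneg (by linarith) hd0.le
    have hlam1 : 1 - lam = u i₁ / d := by
      rw [hlam]; field_simp; rw [hd]; ring
    have hlam1' : 0 ≤ 1 - lam := by rw [hlam1]; exact div_nonneg hui₁ hd0.le
    have hij : i₁ ≠ j₁ := by
      intro hcc; rw [hcc] at hwi₁; linarith
    refine ⟨fun k => (if k = i₁ then lam else 0) + (if k = j₁ then 1 - lam else 0),
      ?_, ?_, ?_, ?_⟩
    · intro k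
      apply add_nonneg <;> split_ifs <;> simp [hlam0, hlam1']
    · rw [Finset.sum_add_distrib]
      simp [Finset.sum_ite_eq']
    · rw [sum_pair_mul]
      have : lam * u i₁ + (1 - lam) * u j₁ = 0 := by
        rw [hlam1, hlam]; field_simp; ring
      linarith
    · rw [sum_pair_mul]
      have : lam * w i₁ + (1 - lam) * w j₁ = (u i₁ * w j₁ - u j₁ * w i₁) / d := by
        rw [hlam1, hlam]; field_simp; ring
      rw [this]
      exact div_nonneg cross hd0.le

/-- Corollary 1 of the paper (recovering a primal solution). -/
theorem primal_recovery {n m : ℕ} (A₁ A₂ : Matrix (Fin n) (Fin n) ℝ)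
    (X : Fin m → Matrix (Fin n) (Fin n) ℝ) (ε : ℝ) (hε : 0 < ε)
    (h : ¬ ∃ p ∈ Set.Icc (0 : ℝ) 1,
        ∀ i, frob (p • A₁ + (1 - p) • A₂) (X i) < ε / 2) :
    ∃ q : Fin m → ℝ, (∀ i, 0 ≤ q i) ∧ (∑ i, q i) = 1 ∧
      ε / 2 ≤ frob A₁ (∑ i, q i • X i) ∧ ε / 2 ≤ frob A₂ (∑ i, q i • X i) := by
  push_neg at h
  set a : Fin m → ℝ := fun i => frob A₁ (X i) with ha
  set b : Fin m → ℝ := fun i => frob A₂ (X i) with hb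
  have key : ∀ p ∈ Set.Icc (0:ℝ) 1,
      ∃ i, 0 ≤ p * (a i - ε / 2) + (1 - p) * (b i - ε / 2) := by
    intro p hp
    obtain ⟨i, hi⟩ := h p hp
    rw [frob_comb] at hi
    exact ⟨i, by rw [ha, hb]; nlinarith⟩
  obtain ⟨q, hq0, hq1, hqu, hqw⟩ := real_key (fun i => a i - ε / 2)
    (fun i => b i - ε / 2) key
  refine ⟨q, hq0, hq1, ?_, ?_⟩
  · rw [frob_sum_smul]
    have : ∑ i, q i * (a i - ε / 2) = (∑ i, q i * a i) - ε / 2 := by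
      simp [mul_sub, Finset.sum_sub_distrib, ← Finset.sum_mul, hq1]
    rw [this] at hqu
    rw [ha] at hqu
    linarith [hqu]
  · rw [frob_sum_smul]
    have : ∑ i, q i * (b i - ε / 2) = (∑ i, q i * b i) - ε / 2 := by
      simp [mul_sub, Finset.sum_sub_distrib, ← Finset.sum_mul, hq1]
    rw [this] at hqw
    rw [hb] at hqw
    linarith [hqw]
end

section
/- Let A be a real symmetric n×n matrix, b ∈ ℝⁿ, M a real symmetric positive definite n×n matrix, c ∈ ℝ, κ > 0, and δ > 0. Define the (n+1)×(n+1) matrices A₁ = (1/(2κ))·[[−c, bᵀ],[b, A]] and A₂ = (1/(2κ))·[[1, 0],[0, −M]]. Suppose there exists a positive semidefinite matrix X of size (n+1)×(n+1) with tr(X) ≤ 1, A₁ • X ≥ δ, and A₂ • X ≥ δ. Then there exists a vector x ∈ ℝⁿ such that xᵀ A x + 2 bᵀ x ≥ c and xᵀ M x ≤ 1. -/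
open Matrix BigOperators

lemma frob_eq_sum {m : Type*} [Fintype m] (A X : Matrix m m ℝ) :
    frob A X = ∑ i, ∑ j, A i j * X i j := by
  unfold frob
  rw [Matrix.trace]
  simp only [Matrix.diag_apply, Matrix.mul_apply, Matrix.transpose_apply]
  exact Finset.sum_comm

lemma frob_vecMulVec {n : ℕ} (A : Matrix (Fin n) (Fin n) ℝ) (y : Fin n → ℝ) :
    frob A (Matrix.vecMulVec y y) = y ⬝ᵥ A.mulVec y := by
  simp only [frob_eq_sum, Matrix.vecMulVec_apply, dotProduct, Matrix.mulVec, Finset.mul_sum]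
  apply Finset.sum_congr rfl; intro i _
  apply Finset.sum_congr rfl; intro j _
  ring

section
open scoped MatrixOrder
noncomputable def Matrix.PosSemidef.sqrt {n : ℕ} {Z : Matrix (Fin n) (Fin n) ℝ}
    (_hZ : Z.PosSemidef) : Matrix (Fin n) (Fin n) ℝ := CFC.sqrt Z
lemma Matrix.PosSemidef.sqrt_mul_self {n : ℕ} {Z : Matrix (Fin n) (Fin n) ℝ}
    (hZ : Z.PosSemidef) : hZ.sqrt * hZ.sqrt = Z := CFC.sqrt_mul_sqrt_self Z hZ.nonneg
lemma Matrix.PosSemidef.posSemidef_sqrt {n : ℕ} {Z : Matrix (Fin n) (Fin n) ℝ}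
    (hZ : Z.PosSemidef) : hZ.sqrt.PosSemidef := (CFC.sqrt_nonneg Z).posSemidef
end

lemma frob_psd_decomp {n : ℕ} (C : Matrix (Fin n) (Fin n) ℝ) {Z : Matrix (Fin n) (Fin n) ℝ}
    (hZ : Z.PosSemidef) :
    frob C Z = ∑ k, (fun j => hZ.sqrt k j) ⬝ᵥ C.mulVec (fun j => hZ.sqrt k j) := by
  have hS : hZ.sqrt * hZ.sqrt = Z := hZ.sqrt_mul_self
  have hsym : ∀ i j, hZ.sqrt i j = hZ.sqrt j i := by
    intro i j
    have h := hZ.posSemidef_sqrt.1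
    rw [Matrix.IsHermitian] at h
    conv_lhs => rw [← h]
    simp [Matrix.conjTranspose_apply]
  have hZij : ∀ i j, Z i j = ∑ k, hZ.sqrt k i * hZ.sqrt k j := by
    intro i j
    have e : Z i j = ∑ k, hZ.sqrt i k * hZ.sqrt k j := by
      rw [← Matrix.mul_apply, hS]
    rw [e]
    exact Finset.sum_congr rfl fun k _ => by rw [hsym i k]
  rw [frob_eq_sum]
  have h1 : ∀ i, (∑ j, C i j * Z i j) = ∑ k, ∑ j, hZ.sqrt k i * (C i j * hZ.sqrt k j) := by
    intro i
    rw [Finset.sum_comm]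
    refine Finset.sum_congr rfl fun j _ => ?_
    rw [hZij i j, Finset.mul_sum]
    exact Finset.sum_congr rfl fun k _ => by ring
  simp only [h1]
  rw [Finset.sum_comm]
  refine Finset.sum_congr rfl fun k _ => ?_
  simp only [dotProduct, Matrix.mulVec, Finset.mul_sum]

lemma frob_nonneg {n : ℕ} {C Z : Matrix (Fin n) (Fin n) ℝ}
    (hC : C.PosSemidef) (hZ : Z.PosSemidef) : 0 ≤ frob C Z := by
  rw [frob_psd_decomp C hZ]
  apply Finset.sum_nonneg
  intro k _
  simpa using hC.dotProduct_mulVec_nonneg (fun j => hZ.sqrt k j)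

lemma frob_smul {m : Type*} [Fintype m] (a : ℝ) (A X : Matrix m m ℝ) :
    frob (a • A) X = a * frob A X := by
  unfold frob
  rw [Matrix.transpose_smul, Matrix.smul_mul, Matrix.trace_smul, smul_eq_mul]

lemma frob_fromBlocks {n : ℕ} (P : Matrix Unit Unit ℝ) (B : Matrix Unit (Fin n) ℝ)
    (C : Matrix (Fin n) Unit ℝ) (D : Matrix (Fin n) (Fin n) ℝ)
    (X : Matrix (Unit ⊕ Fin n) (Unit ⊕ Fin n) ℝ) :
    frob (Matrix.fromBlocks P B C D) X
      = P () () * X (.inl ()) (.inl ()) + (∑ j, B () j * X (.inl ()) (.inr j))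
        + (∑ i, C i () * X (.inr i) (.inl ())) + ∑ i, ∑ j, D i j * X (.inr i) (.inr j) := by
  rw [frob_eq_sum]
  rw [Fintype.sum_sum_type]
  simp only [Fintype.sum_sum_type, Matrix.fromBlocks_apply₁₁, Matrix.fromBlocks_apply₁₂,
    Matrix.fromBlocks_apply₂₁, Matrix.fromBlocks_apply₂₂]
  simp [Finset.sum_add_distrib]
  ring

lemma quad_expand {n : ℕ} (X : Matrix (Unit ⊕ Fin n) (Unit ⊕ Fin n) ℝ) (s : ℝ) (v : Fin n → ℝ) :
    Sum.elim (fun _ => s) v ⬝ᵥ X *ᵥ Sum.elim (fun _ => s) v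
      = s * s * X (.inl ()) (.inl ()) + s * (∑ j, X (.inl ()) (.inr j) * v j)
        + s * (∑ i, X (.inr i) (.inl ()) * v i)
        + ∑ i, ∑ j, X (.inr i) (.inr j) * v i * v j := by
  have key : ∀ a : Unit ⊕ Fin n, (X *ᵥ Sum.elim (fun _ => s) v) a
      = X a (.inl ()) * s + ∑ j, X a (.inr j) * v j := by
    intro a
    simp [Matrix.mulVec, dotProduct, Fintype.sum_sum_type]
  rw [dotProduct, Fintype.sum_sum_type]
  simp only [Sum.elim_inl, Sum.elim_inr, key]
  have h2 : ∀ i, v i * (X (.inr i) (.inl ()) * s + ∑ j, X (.inr i) (.inr j) * v j)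
      = X (.inr i) (.inl ()) * v i * s + ∑ j, X (.inr i) (.inr j) * v i * v j := by
    intro i
    rw [mul_add, Finset.mul_sum]
    congr 1
    · ring
    · exact Finset.sum_congr rfl fun j _ => by ring
  simp only [h2]
  rw [Finset.sum_add_distrib, ← Finset.sum_mul]
  simp only [Finset.univ_unique, Finset.sum_singleton]
  rw [mul_add, Finset.mul_sum]
  have h3 : (∑ i, X (.inr i) (.inl ()) * v i) * s = s * ∑ i, X (.inr i) (.inl ()) * v i := by ring
  rw [h3]
  ring

lemma frob_sub_first {m : Type*} [Fintype m] (P Q X : Matrix m m ℝ) :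
    frob (P - Q) X = frob P X - frob Q X := by
  simp only [frob_eq_sum, Matrix.sub_apply, sub_mul, Finset.sum_sub_distrib]

lemma frob_second_sub_smul {m : Type*} [Fintype m] (A Y W : Matrix m m ℝ) (a : ℝ) :
    frob A (Y - a • W) = frob A Y - a * frob A W := by
  simp only [frob_eq_sum, Matrix.sub_apply, Matrix.smul_apply, smul_eq_mul, mul_sub,
    Finset.sum_sub_distrib, Finset.mul_sum]
  congr 1
  refine Finset.sum_congr rfl fun i _ => Finset.sum_congr rfl fun j _ => by ring

lemma dot_mulVec_sum {m : Type*} [Fintype m] (N : Matrix m m ℝ) (u v : m → ℝ) :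
    u ⬝ᵥ N *ᵥ v = ∑ i, ∑ j, N i j * u i * v j := by
  simp only [dotProduct, Matrix.mulVec, Finset.mul_sum]
  refine Finset.sum_congr rfl fun i _ => Finset.sum_congr rfl fun j _ => by ring

lemma quad_shift {n : ℕ} (A : Matrix (Fin n) (Fin n) ℝ) (x₀ u : Fin n → ℝ) (s : ℝ) :
    (x₀ + s • u) ⬝ᵥ A *ᵥ (x₀ + s • u)
      = x₀ ⬝ᵥ A *ᵥ x₀ + s * (x₀ ⬝ᵥ A *ᵥ u + u ⬝ᵥ A *ᵥ x₀) + s^2 * (u ⬝ᵥ A *ᵥ u) := by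
  simp only [Matrix.mulVec_add, Matrix.mulVec_smul, dotProduct_add, add_dotProduct,
    dotProduct_smul, smul_dotProduct, smul_eq_mul]
  ring


/-- The block matrix `A₁ = (1/(2κ))·[[−c, bᵀ],[b, A]]`. -/
noncomputable def A1mat {n : ℕ} (A : Matrix (Fin n) (Fin n) ℝ) (b : Fin n → ℝ)
    (c κ : ℝ) : Matrix (Unit ⊕ Fin n) (Unit ⊕ Fin n) ℝ :=
  (2 * κ)⁻¹ • Matrix.fromBlocks (Matrix.of fun _ _ => -c) (Matrix.of fun _ j => b j)
      (Matrix.of fun i _ => b i) A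

/-- The block matrix `A₂ = (1/(2κ))·[[1, 0],[0, −M]]`. -/
noncomputable def A2mat {n : ℕ} (M : Matrix (Fin n) (Fin n) ℝ)
    (κ : ℝ) : Matrix (Unit ⊕ Fin n) (Unit ⊕ Fin n) ℝ :=
  (2 * κ)⁻¹ • Matrix.fromBlocks (Matrix.of fun _ _ => (1 : ℝ)) 0 0 (-M)

set_option maxHeartbeats 1000000 in
/-- any strictly feasible SDP solution can be rounded into a feasible
solution of the trust-region feasibility problem. -/
theorem sdp_feasible_implies_tr_feasible {n : ℕ}
    (A : Matrix (Fin n) (Fin n) ℝ) (hA : A.IsSymm)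
    (b : Fin n → ℝ) (M : Matrix (Fin n) (Fin n) ℝ) (hM : M.PosDef)
    (c κ δ : ℝ) (hκ : 0 < κ) (hδ : 0 < δ)
    (h : ∃ X : Matrix (Unit ⊕ Fin n) (Unit ⊕ Fin n) ℝ,
      X.PosSemidef ∧ X.trace ≤ 1 ∧
        δ ≤ frob (A1mat A b c κ) X ∧ δ ≤ frob (A2mat M κ) X) :
    ∃ x : Fin n → ℝ,
      c ≤ x ⬝ᵥ A.mulVec x + 2 * (b ⬝ᵥ x) ∧ x ⬝ᵥ M.mulVec x ≤ 1 := by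
  obtain ⟨X, hX, -, h1, h2⟩ := h
  have h2κ : (0:ℝ) < 2*κ := by linarith
  have hκδ : (0:ℝ) < 2*κ*δ := by positivity
  have hXsym : ∀ p q, X p q = X q p := by
    intro p q
    have hh := congrFun (congrFun hX.1 q) p
    simpa [Matrix.conjTranspose_apply] using hh
  obtain ⟨t, htdef⟩ : ∃ z : ℝ, z = X (.inl ()) (.inl ()) := ⟨_, rfl⟩
  obtain ⟨y, hydef⟩ : ∃ z : Fin n → ℝ, z = fun i => X (.inr i) (.inl ()) := ⟨_, rfl⟩
  obtain ⟨Y, hYdef⟩ : ∃ z : Matrix (Fin n) (Fin n) ℝ, z = X.submatrix Sum.inr Sum.inr :=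
    ⟨_, rfl⟩
  have hYpsd : Y.PosSemidef := by rw [hYdef]; exact hX.submatrix Sum.inr
  obtain ⟨TA, hTAdef⟩ : ∃ z : ℝ, z = frob A Y := ⟨_, rfl⟩
  obtain ⟨TM, hTMdef⟩ : ∃ z : ℝ, z = frob M Y := ⟨_, rfl⟩
  obtain ⟨F, hFdef⟩ : ∃ z : ℝ, z = y ⬝ᵥ A *ᵥ y := ⟨_, rfl⟩
  obtain ⟨G, hGdef⟩ : ∃ z : ℝ, z = b ⬝ᵥ y := ⟨_, rfl⟩
  obtain ⟨N, hNdef⟩ : ∃ z : ℝ, z = y ⬝ᵥ M *ᵥ y := ⟨_, rfl⟩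
  have hXinl : ∀ j, X (.inl ()) (.inr j) = y j := by
    intro j
    simp only [hydef]
    exact hXsym _ _
  have hXinr : ∀ i, X (.inr i) (.inl ()) = y i := by intro i; simp only [hydef]
  have hYij : ∀ i j, X (.inr i) (.inr j) = Y i j := by
    intro i j
    simp only [hYdef, Matrix.submatrix_apply]
  have e1 : frob (A1mat A b c κ) X = (2*κ)⁻¹ * (-c*t + 2*G + TA) := by
    rw [A1mat, frob_smul, frob_fromBlocks]
    simp only [Matrix.of_apply, hXinl, hXinr, hYij]
    have hTAe : (∑ i, ∑ j, A i j * Y i j) = TA := by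
      rw [hTAdef, frob_eq_sum]
    have hGe : (∑ i, b i * y i) = G := by rw [hGdef]; rfl
    rw [hTAe, hGe, ← htdef]
    ring
  have e2 : frob (A2mat M κ) X = (2*κ)⁻¹ * (t - TM) := by
    rw [A2mat, frob_smul, frob_fromBlocks]
    simp only [Matrix.of_apply, hYij, Matrix.zero_apply, zero_mul, Finset.sum_const_zero,
      add_zero, one_mul, Matrix.neg_apply]
    have hTMe : (∑ i, ∑ j, -M i j * Y i j) = -TM := by
      rw [hTMdef, frob_eq_sum, ← Finset.sum_neg_distrib]
      refine Finset.sum_congr rfl fun i _ => ?_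
      rw [← Finset.sum_neg_distrib]
      exact Finset.sum_congr rfl fun j _ => by ring
    rw [hTMe, ← htdef]
    ring
  have h1' : 2*κ*δ ≤ -c*t + 2*G + TA := by
    rw [e1] at h1
    have hmm := mul_le_mul_of_nonneg_left h1 h2κ.le
    rwa [← mul_assoc, mul_inv_cancel₀ h2κ.ne', one_mul] at hmm
  have h2' : 2*κ*δ ≤ t - TM := by
    rw [e2] at h2
    have hmm := mul_le_mul_of_nonneg_left h2 h2κ.le
    rwa [← mul_assoc, mul_inv_cancel₀ h2κ.ne', one_mul] at hmm
  have hTM0 : 0 ≤ TM := by rw [hTMdef]; exact frob_nonneg hM.posSemidef hYpsd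
  have ht : 0 < t := by linarith
  have htne : t ≠ 0 := ht.ne'
  have hti : t * t⁻¹ = 1 := mul_inv_cancel₀ htne
  obtain ⟨Z, hZdef⟩ : ∃ z : Matrix (Fin n) (Fin n) ℝ, z = Y - t⁻¹ • Matrix.vecMulVec y y :=
    ⟨_, rfl⟩
  have hYsym : ∀ i j, Y i j = Y j i := by
    intro i j
    simp only [hYdef, Matrix.submatrix_apply]
    exact hXsym _ _
  have hZpsd : Z.PosSemidef := by
    refine Matrix.PosSemidef.of_dotProduct_mulVec_nonneg ?_ ?_
    · ext i j
      simp only [hZdef, Matrix.conjTranspose_apply, Matrix.sub_apply, Matrix.smul_apply,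
        Matrix.vecMulVec_apply, smul_eq_mul, star_trivial]
      rw [hYsym j i]
      ring
    · intro v
      have hp := hX.dotProduct_mulVec_nonneg (Sum.elim (fun _ => -(t⁻¹*(y ⬝ᵥ v))) v)
      rw [star_trivial, quad_expand] at hp
      simp only [hXinl, hXinr, hYij] at hp
      have hyv1 : (∑ j, y j * v j) = y ⬝ᵥ v := rfl
      have hX00 : X (.inl ()) (.inl ()) = t := htdef.symm
      have hQ : (∑ i, ∑ j, Y i j * v i * v j) = v ⬝ᵥ Y *ᵥ v := (dot_mulVec_sum Y v v).symm
      rw [hyv1, hX00, hQ] at hp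
      have hW : Matrix.vecMulVec y y *ᵥ v = (y ⬝ᵥ v) • y := by
        ext i
        simp only [Matrix.mulVec, Matrix.vecMulVec_apply, dotProduct, Pi.smul_apply,
          smul_eq_mul, Finset.sum_mul]
        exact Finset.sum_congr rfl fun j _ => by ring
      have hZv : star v ⬝ᵥ Z *ᵥ v = v ⬝ᵥ Y *ᵥ v - t⁻¹ * ((y ⬝ᵥ v) * (y ⬝ᵥ v)) := by
        rw [star_trivial, hZdef, Matrix.sub_mulVec, dotProduct_sub,
          Matrix.smul_mulVec, hW, dotProduct_smul, dotProduct_smul,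
          smul_eq_mul, smul_eq_mul, dotProduct_comm v y]
      rw [hZv]
      have hkey : (-(t⁻¹*(y ⬝ᵥ v)))*(-(t⁻¹*(y ⬝ᵥ v)))*t + (-(t⁻¹*(y ⬝ᵥ v)))*(y ⬝ᵥ v)
          + (-(t⁻¹*(y ⬝ᵥ v)))*(y ⬝ᵥ v) = -(t⁻¹*((y ⬝ᵥ v)*(y ⬝ᵥ v))) := by
        linear_combination (t⁻¹*(y ⬝ᵥ v)*(y ⬝ᵥ v))*hti
      linarith [hp, hkey]
  obtain ⟨α, hαdef⟩ : ∃ z : ℝ, z = TA - t⁻¹*F := ⟨_, rfl⟩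
  obtain ⟨β, hβdef⟩ : ∃ z : ℝ, z = TM - t⁻¹*N := ⟨_, rfl⟩
  have hαZ : frob A Z = α := by
    rw [hZdef, frob_second_sub_smul, frob_vecMulVec, hαdef, hTAdef, hFdef]
  have hβZ : frob M Z = β := by
    rw [hZdef, frob_second_sub_smul, frob_vecMulVec, hβdef, hTMdef, hNdef]
  have hβ0 : 0 ≤ β := hβZ ▸ frob_nonneg hM.posSemidef hZpsd
  rcases le_or_gt (c*t^2) (F + 2*t*G) with hcase | hcase
  · -- easy case : x = t⁻¹ • y works
    refine ⟨t⁻¹ • y, ?_, ?_⟩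
    · have hxA : (t⁻¹ • y) ⬝ᵥ A *ᵥ (t⁻¹ • y) = t⁻¹ * (t⁻¹ * F) := by
        rw [hFdef]
        simp only [Matrix.mulVec_smul, smul_dotProduct, dotProduct_smul, smul_eq_mul]
      have hxb : b ⬝ᵥ (t⁻¹ • y) = t⁻¹ * G := by
        rw [hGdef]
        simp only [dotProduct_smul, smul_eq_mul]
      rw [show (t⁻¹ • y) ⬝ᵥ A.mulVec (t⁻¹ • y) = t⁻¹ * (t⁻¹ * F) from hxA,
        show b ⬝ᵥ (t⁻¹ • y) = t⁻¹ * G from hxb]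
      have hmul := mul_le_mul_of_nonneg_left hcase
        (mul_nonneg (inv_nonneg.mpr ht.le) (inv_nonneg.mpr ht.le))
      have ea : t⁻¹*t⁻¹*(c*t^2) = c := by
        linear_combination c*(t*t⁻¹+1)*hti
      have eb : t⁻¹*t⁻¹*(F + 2*t*G) = t⁻¹*(t⁻¹*F) + 2*(t⁻¹*G) := by
        linear_combination (2*(t⁻¹*G))*hti
      linarith
    · have hxM : (t⁻¹ • y) ⬝ᵥ M *ᵥ (t⁻¹ • y) = t⁻¹ * (t⁻¹ * N) := by
        rw [hNdef]
        simp only [Matrix.mulVec_smul, smul_dotProduct, dotProduct_smul, smul_eq_mul]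
      rw [show (t⁻¹ • y) ⬝ᵥ M.mulVec (t⁻¹ • y) = t⁻¹ * (t⁻¹ * N) from hxM]
      have h3 : t⁻¹*N ≤ t := by linarith
      have h4 := mul_le_mul_of_nonneg_left h3 (inv_nonneg.mpr ht.le)
      have h5 : t⁻¹*t = 1 := inv_mul_cancel₀ htne
      linarith
  · -- hard case
    have hinv : (0:ℝ) < t⁻¹ := inv_pos.mpr ht
    have hmul := mul_lt_mul_of_pos_left hcase hinv
    have ea : t⁻¹*(F + 2*t*G) = t⁻¹*F + 2*G := by
      linear_combination (2*G)*hti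
    have eb : t⁻¹*(c*t^2) = c*t := by
      linear_combination (c*t)*hti
    have hP0 : 0 < c*t - 2*G - t⁻¹*F := by linarith
    have hαpos : 2*κ*δ + (c*t - 2*G - t⁻¹*F) ≤ α := by linarith
    have hα0 : 0 < α := by linarith
    have hβup : β ≤ (t - t⁻¹*N) - 2*κ*δ := by linarith
    have hW0 : 0 < t - t⁻¹*N := by linarith
    have hCZ : frob (β • A - α • M) Z = 0 := by
      rw [frob_sub_first, frob_smul, frob_smul, hαZ, hβZ]
      ring
    obtain ⟨u, hu0, hCu⟩ : ∃ u : Fin n → ℝ, u ≠ 0 ∧ 0 ≤ u ⬝ᵥ (β • A - α • M) *ᵥ u := by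
      by_contra hcon
      push_neg at hcon
      have hdec := frob_psd_decomp (β • A - α • M) hZpsd
      rw [hCZ] at hdec
      have hterms : ∀ k : Fin n,
          (fun j => hZpsd.sqrt k j) ⬝ᵥ (β • A - α • M) *ᵥ (fun j => hZpsd.sqrt k j) ≤ 0 := by
        intro k
        by_cases hk : (fun j => hZpsd.sqrt k j) = 0
        · rw [hk]; simp
        · exact (hcon _ hk).le
      have hzero := (Finset.sum_eq_zero_iff_of_nonpos (fun k _ => hterms k)).mp hdec.symm
      have hSzero : hZpsd.sqrt = 0 := by
        ext k j
        by_cases hk : (fun j => hZpsd.sqrt k j) = 0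
        · exact congrFun hk j
        · exact absurd (hzero k (Finset.mem_univ k)) (ne_of_lt (hcon _ hk))
      have hZ0 : Z = 0 := by
        rw [← hZpsd.sqrt_mul_self, hSzero]
        simp
      rw [hZ0] at hαZ
      have hfz : frob A (0 : Matrix (Fin n) (Fin n) ℝ) = 0 := by
        simp [frob]
      rw [hfz] at hαZ
      linarith
    obtain ⟨μ, hμdef⟩ : ∃ z : ℝ, z = u ⬝ᵥ M *ᵥ u := ⟨_, rfl⟩
    obtain ⟨av, havdef⟩ : ∃ z : ℝ, z = u ⬝ᵥ A *ᵥ u := ⟨_, rfl⟩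
    have hμ : 0 < μ := by
      rw [hμdef]
      have := hM.dotProduct_mulVec_pos hu0
      rwa [star_trivial] at this
    have hCuu : α * μ ≤ β * av := by
      rw [hμdef, havdef]
      have hexp : u ⬝ᵥ (β • A - α • M) *ᵥ u
          = β * (u ⬝ᵥ A *ᵥ u) - α * (u ⬝ᵥ M *ᵥ u) := by
        rw [Matrix.sub_mulVec, dotProduct_sub, Matrix.smul_mulVec,
          Matrix.smul_mulVec, dotProduct_smul, dotProduct_smul,
          smul_eq_mul, smul_eq_mul]
      linarith [hCu, hexp]
    have hβpos : 0 < β := by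
      rcases eq_or_lt_of_le hβ0 with hb | hb
      · exfalso
        rw [← hb, zero_mul] at hCuu
        linarith [mul_pos hα0 hμ]
      · exact hb
    have hapos : 0 < av := by
      by_contra hne
      push_neg at hne
      have h9 := mul_le_mul_of_nonneg_left hne hβpos.le
      rw [mul_zero] at h9
      linarith [mul_pos hα0 hμ, hCuu]
    have hβW : β < t - t⁻¹*N := by linarith
    have k1 : av*β < av*(t - t⁻¹*N) := mul_lt_mul_of_pos_left hβW hapos
    have k2 : (c*t - 2*G - t⁻¹*F)*μ < α*μ :=
      mul_lt_mul_of_pos_right (by linarith : c*t - 2*G - t⁻¹*F < α) hμ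
    have keypos : (c*t - 2*G - t⁻¹*F)*μ < av*(t - t⁻¹*N) := by
      have hc : β*av = av*β := mul_comm _ _
      linarith
    obtain ⟨ν, hνdef⟩ : ∃ z : ℝ, z = t⁻¹*(t⁻¹*N) := ⟨_, rfl⟩
    obtain ⟨d, hddef⟩ : ∃ z : ℝ, z = t⁻¹*(t⁻¹*F) + 2*(t⁻¹*G) - c := ⟨_, rfl⟩
    have hd : t*d = -(c*t - 2*G - t⁻¹*F) := by
      rw [hddef]
      linear_combination (t⁻¹*F + 2*G)*hti
    have hw : t*(1-ν) = t - t⁻¹*N := by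
      rw [hνdef]
      linear_combination (-(t⁻¹*N))*hti
    have keq : av*(t - t⁻¹*N) - (c*t - 2*G - t⁻¹*F)*μ = t*(μ*d + av*(1-ν)) := by
      linear_combination (-av)*hw + (-μ)*hd
    have keynorm : 0 < μ*d + av*(1-ν) := by
      by_contra hne
      push_neg at hne
      have h9 := mul_le_mul_of_nonneg_left hne ht.le
      rw [mul_zero] at h9
      linarith [keq, keypos]
    have hν1 : ν < 1 := by
      by_contra hne
      push_neg at hne
      have h9 : t*(1-ν) ≤ t*0 := mul_le_mul_of_nonneg_left (by linarith) ht.le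
      rw [mul_zero] at h9
      linarith [hW0, hw]
    obtain ⟨x₀, hx₀def⟩ : ∃ z : Fin n → ℝ, z = t⁻¹ • y := ⟨_, rfl⟩
    have hx₀M : x₀ ⬝ᵥ M *ᵥ x₀ = ν := by
      rw [hx₀def, hνdef, hNdef]
      simp only [Matrix.mulVec_smul, smul_dotProduct, dotProduct_smul, smul_eq_mul]
    have hx₀A : x₀ ⬝ᵥ A *ᵥ x₀ + 2*(b ⬝ᵥ x₀) = d + c := by
      rw [hx₀def, hddef, hFdef, hGdef]
      simp only [Matrix.mulVec_smul, smul_dotProduct, dotProduct_smul, smul_eq_mul]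
      ring
    obtain ⟨rr, hrrdef⟩ : ∃ z : ℝ, z = x₀ ⬝ᵥ M *ᵥ u + u ⬝ᵥ M *ᵥ x₀ := ⟨_, rfl⟩
    obtain ⟨pp, hppdef⟩ : ∃ z : ℝ, z = x₀ ⬝ᵥ A *ᵥ u + u ⬝ᵥ A *ᵥ x₀ + 2*(b ⬝ᵥ u) := ⟨_, rfl⟩
    have hdisc : (0:ℝ) ≤ (rr/2)^2 + μ*(1-ν) := by
      linarith [sq_nonneg (rr/2), mul_pos hμ (by linarith : (0:ℝ) < 1-ν)]
    obtain ⟨D, hDdef⟩ : ∃ z : ℝ, z = Real.sqrt ((rr/2)^2 + μ*(1-ν)) := ⟨_, rfl⟩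
    have hD2 : D^2 = (rr/2)^2 + μ*(1-ν) := by rw [hDdef]; exact Real.sq_sqrt hdisc
    have hDnn : 0 ≤ D := by rw [hDdef]; exact Real.sqrt_nonneg _
    have main : ∀ s : ℝ, 0 ≤ s*(μ*pp - av*rr) → (μ*ν + s*μ*rr + (s*μ)^2 - μ = 0) →
        ∃ x : Fin n → ℝ, c ≤ x ⬝ᵥ A.mulVec x + 2 * (b ⬝ᵥ x) ∧ x ⬝ᵥ M.mulVec x ≤ 1 := by
      intro s hse hq
      have hV : ν + s*rr + s^2*μ = 1 := by
        have h0 : μ*(ν + s*rr + s^2*μ - 1) = 0 := by linear_combination hq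
        rcases mul_eq_zero.mp h0 with h' | h'
        · exact absurd h' hμ.ne'
        · linarith
      refine ⟨x₀ + s • u, ?_, ?_⟩
      · have hqA := quad_shift A x₀ u s
        have hbx : b ⬝ᵥ (x₀ + s • u) = b ⬝ᵥ x₀ + s*(b ⬝ᵥ u) := by
          simp only [dotProduct_add, dotProduct_smul, smul_eq_mul]
        rw [← havdef] at hqA
        rw [show (x₀ + s • u) ⬝ᵥ A.mulVec (x₀ + s • u)
            = x₀ ⬝ᵥ A *ᵥ x₀ + s * (x₀ ⬝ᵥ A *ᵥ u + u ⬝ᵥ A *ᵥ x₀) + s^2 * av from hqA, hbx]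
        have hexp : μ*((x₀ ⬝ᵥ A *ᵥ x₀ + s*(x₀ ⬝ᵥ A *ᵥ u + u ⬝ᵥ A *ᵥ x₀) + s^2*av)
              + 2*(b ⬝ᵥ x₀ + s*(b ⬝ᵥ u)) - c)
            = μ*d + av*(1-ν) + s*(μ*pp - av*rr) := by
          linear_combination μ*hx₀A - μ*s*hppdef + av*hV
        by_contra hne
        push_neg at hne
        have h9 : μ*((x₀ ⬝ᵥ A *ᵥ x₀ + s*(x₀ ⬝ᵥ A *ᵥ u + u ⬝ᵥ A *ᵥ x₀) + s^2*av)
              + 2*(b ⬝ᵥ x₀ + s*(b ⬝ᵥ u)) - c) ≤ μ*0 :=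
          mul_le_mul_of_nonneg_left (by linarith) hμ.le
        rw [mul_zero] at h9
        linarith [hexp, keynorm, hse]
      · have hqM := quad_shift M x₀ u s
        rw [← hμdef] at hqM
        rw [show (x₀ + s • u) ⬝ᵥ M.mulVec (x₀ + s • u)
            = x₀ ⬝ᵥ M *ᵥ x₀ + s * (x₀ ⬝ᵥ M *ᵥ u + u ⬝ᵥ M *ᵥ x₀) + s^2 * μ from hqM]
        have hfin : x₀ ⬝ᵥ M *ᵥ x₀ + s*(x₀ ⬝ᵥ M *ᵥ u + u ⬝ᵥ M *ᵥ x₀) + s^2*μ = 1 := by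
          linear_combination hx₀M - s*hrrdef + hV
        linarith
    rcases le_or_gt 0 (μ*pp - av*rr) with he | he
    · have hsμ : ((D - rr/2)/μ)*μ = D - rr/2 := div_mul_cancel₀ _ hμ.ne'
      have hs0 : 0 ≤ (D - rr/2)/μ := by
        apply div_nonneg _ hμ.le
        rw [sub_nonneg]
        by_contra hne
        push_neg at hne
        have h9 := mul_self_lt_mul_self hDnn hne
        linarith [hD2, mul_pos hμ (by linarith : (0:ℝ) < 1-ν), sq_nonneg D]
      exact main _ (mul_nonneg hs0 he)
        (by linear_combination hD2 + (((D - rr/2)/μ)*μ + rr/2 + D)*hsμ)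
    · have hsμ : ((-(rr/2) - D)/μ)*μ = -(rr/2) - D := div_mul_cancel₀ _ hμ.ne'
      have hs0 : (-(rr/2) - D)/μ ≤ 0 := by
        apply div_nonpos_of_nonpos_of_nonneg _ hμ.le
        rw [sub_nonpos]
        by_contra hne
        push_neg at hne
        have h9 := mul_self_lt_mul_self hDnn hne
        linarith [hD2, mul_pos hμ (by linarith : (0:ℝ) < 1-ν), sq_nonneg D]
      exact main _ (by rw [← neg_mul_neg]; exact mul_nonneg (by linarith) (by linarith))
        (by linear_combination hD2 + (((-(rr/2) - D)/μ)*μ + rr/2 - D)*hsμ)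
end
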